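/- Let d ≥ 3, let −2 < λ < 0, and let k ≥ 1 be an integer. Then (−1)^k ∫_{−1}^{1} (1−t)^{−λ/2} (d^k/dt^k)[(1−t²)^{k+(d−3)/2}] dt < 0. Consequently, by the Rodrigues formula (1−t²)^{(d−3)/2} P_{k,d}(t) = (−1)^k R_{k,d} (d^k/dt^k)(1−t²)^{k+(d−3)/2} with R_{k,d} = Γ((d−1)/2)/(2^k Γ(k+(d−1)/2)) > 0, the quantity I_k(d,λ) = |S^{d−2}| ∫_{−1}^{1} (1−t)^{−λ/2} P_{k,d}(t) (1−t²)^{(d−3)/2} dt is strictly negative. -/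

import Mathlib

open MeasureTheory Metric Set
open scoped ENNReal

/-- The surface measure `|S^{n-1}|` of the unit sphere in `ℝ^n`. -/
noncomputable def sphereArea (n : ℕ) : ℝ :=
  (((volume : Measure (EuclideanSpace ℝ (Fin n))).toSphere) Set.univ).toReal

namespace Statement9Aux

/-- Polynomials appearing in the derivatives of `(1 - t^2) ^ β`. -/
noncomputable def Q (β : ℝ) : ℕ → Polynomial ℝ
  | 0 => 1
  | (m + 1) => Polynomial.C (-2 * (β - m)) * Polynomial.X * Q β m
      + (1 - Polynomial.X ^ 2) * (Q β m).derivative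

/-- Formula for the `m`-th derivative of `(1 - t^2) ^ β` on `(-1, 1)`. -/
noncomputable def F (β : ℝ) (m : ℕ) (t : ℝ) : ℝ :=
  (1 - t ^ 2) ^ (β - m) * (Q β m).eval t

/-- The `j`-th derivative of `(1 - t) ^ α`. -/
noncomputable def G (α : ℝ) (j : ℕ) (t : ℝ) : ℝ :=
  (-1) ^ j * (∏ i ∈ Finset.range j, (α - i)) * (1 - t) ^ (α - j)

lemma hasDerivAt_F (β : ℝ) (m : ℕ) {t : ℝ} (ht : t ∈ Set.Ioo (-1 : ℝ) 1) :
    HasDerivAt (F β m) (F β (m + 1) t) t := by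
  have hu : (0 : ℝ) < 1 - t ^ 2 := by nlinarith [ht.1, ht.2]
  have h1 : HasDerivAt (fun s : ℝ => 1 - s ^ 2) (-(2 * t)) t := by
    simpa using ((hasDerivAt_pow 2 t).const_sub 1)
  have h2 : HasDerivAt (fun s : ℝ => (1 - s ^ 2) ^ (β - m))
      ((β - m) * (1 - t ^ 2) ^ (β - m - 1) * (-(2 * t))) t :=
    (h1.rpow_const (p := β - m) (Or.inl hu.ne')).congr_deriv (by ring)
  have h3 : HasDerivAt (fun s : ℝ => (Q β m).eval s) ((Q β m).derivative.eval t) t :=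
    (Q β m).hasDerivAt t
  have h4 := h2.mul h3
  refine (h4 : HasDerivAt (F β m) _ t).congr_deriv (Eq.symm ?_)
  have hup : (1 - t ^ 2) ^ (β - m) = (1 - t ^ 2) ^ (β - m - 1) * (1 - t ^ 2) := by
    conv_lhs => rw [show β - (m : ℝ) = (β - m - 1) + 1 by ring]
    rw [Real.rpow_add hu, Real.rpow_one]
  show F β (m + 1) t = _
  simp only [F, Q, Polynomial.eval_add, Polynomial.eval_mul, Polynomial.eval_C,
    Polynomial.eval_X, Polynomial.eval_sub, Polynomial.eval_pow, Polynomial.eval_one]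
  rw [show (β - ((m : ℕ) + 1 : ℕ) : ℝ) = β - m - 1 by push_cast; ring, hup]
  ring

lemma iteratedDeriv_eq (β : ℝ) (m : ℕ) :
    Set.EqOn (iteratedDeriv m (fun s : ℝ => (1 - s ^ 2) ^ β)) (F β m)
      (Set.Ioo (-1 : ℝ) 1) := by
  induction m with
  | zero => intro t _; simp [F, Q]
  | succ m ih =>
    intro t ht
    have hev : iteratedDeriv m (fun s : ℝ => (1 - s ^ 2) ^ β) =ᶠ[nhds t] F β m :=
      Filter.eventuallyEq_of_mem (isOpen_Ioo.mem_nhds ht) ih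
    rw [iteratedDeriv_succ, hev.deriv_eq, (hasDerivAt_F β m ht).deriv]

lemma hasDerivAt_G (α : ℝ) (j : ℕ) {t : ℝ} (ht : t ∈ Set.Ioo (-1 : ℝ) 1) :
    HasDerivAt (G α j) (G α (j + 1) t) t := by
  have h1t : (0 : ℝ) < 1 - t := by linarith [ht.2]
  have h1 : HasDerivAt (fun s : ℝ => 1 - s) (-1) t := by
    simpa using ((hasDerivAt_id t).const_sub 1)
  have h2 : HasDerivAt (fun s : ℝ => (1 - s) ^ (α - j))
      ((α - j) * (1 - t) ^ (α - j - 1) * (-1)) t :=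
    (Real.hasDerivAt_rpow_const (Or.inl h1t.ne')).comp t h1
  have h3 := h2.const_mul ((-1 : ℝ) ^ j * ∏ i ∈ Finset.range j, (α - i))
  refine (h3 : HasDerivAt (G α j) _ t).congr_deriv (Eq.symm ?_)
  show G α (j + 1) t = _
  simp only [G, Finset.prod_range_succ]
  rw [show (α - ((j : ℕ) + 1 : ℕ) : ℝ) = α - j - 1 by push_cast; ring, pow_succ]
  ring

lemma contOn_base (a b : ℝ) (hb : 0 ≤ b) (hab : 0 < a + b) (r : Polynomial ℝ) :
    ContinuousOn (fun t : ℝ => (1 - t) ^ a * ((1 - t ^ 2) ^ b * r.eval t))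
      (Set.Icc (-1 : ℝ) 1) := by
  have heq : Set.EqOn (fun t : ℝ => (1 - t) ^ a * ((1 - t ^ 2) ^ b * r.eval t))
      (fun t : ℝ => (1 - t) ^ (a + b) * ((1 + t) ^ b * r.eval t))
      (Set.Icc (-1 : ℝ) 1) := by
    intro t ht
    have h1 : (0 : ℝ) ≤ 1 - t := by linarith [ht.2]
    have h2 : (0 : ℝ) ≤ 1 + t := by linarith [ht.1]
    simp only
    rw [show (1 - t ^ 2 : ℝ) = (1 - t) * (1 + t) by ring, Real.mul_rpow h1 h2,
      Real.rpow_add' h1 hab.ne']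
    ring
  refine ContinuousOn.congr ?_ heq
  intro t _
  have c1 : ContinuousAt (fun t : ℝ => (1 - t) ^ (a + b)) t :=
    (continuousAt_const.sub continuousAt_id).rpow_const (Or.inr hab.le)
  have c2 : ContinuousAt (fun t : ℝ => (1 + t) ^ b) t :=
    (continuousAt_const.add continuousAt_id).rpow_const (Or.inr hb)
  exact (c1.mul (c2.mul (r.continuous.continuousAt))).continuousWithinAt

lemma GF_eq (α β : ℝ) (j m : ℕ) (t : ℝ) :
    G α j t * F β m t
      = ((-1 : ℝ) ^ j * ∏ i ∈ Finset.range j, (α - i)) *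
        ((1 - t) ^ (α - j) * ((1 - t ^ 2) ^ (β - m) * (Q β m).eval t)) := by
  simp only [G, F]; ring

lemma contOn_GF {α β : ℝ} (j m : ℕ) (hq : 0 ≤ β - m) (hp : 0 < α - j + (β - m)) :
    ContinuousOn (fun t => G α j t * F β m t) (Set.Icc (-1 : ℝ) 1) := by
  have : (fun t => G α j t * F β m t)
      = fun t => ((-1 : ℝ) ^ j * ∏ i ∈ Finset.range j, (α - i)) *
        ((1 - t) ^ (α - j) * ((1 - t ^ 2) ^ (β - m) * (Q β m).eval t)) := by
    funext t; exact GF_eq α β j m t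
  rw [this]
  exact continuousOn_const.mul (contOn_base _ _ hq hp (Q β m))

lemma intInt_GF {α β : ℝ} (j m : ℕ) (hq : 0 ≤ β - m) (hp : 0 < α - j + (β - m)) :
    IntervalIntegrable (fun t => G α j t * F β m t) volume (-1 : ℝ) 1 :=
  by
  apply ContinuousOn.intervalIntegrable
  rw [Set.uIcc_of_le (by norm_num : (-1:ℝ) ≤ 1)]
  exact contOn_GF j m hq hp


lemma ibp_step {α β : ℝ} (hα : α ∈ Set.Ioo (0 : ℝ) 1) {k : ℕ} (hβ : (k : ℝ) ≤ β)
    {j : ℕ} (hj : j < k) :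
    ∫ t in (-1 : ℝ)..1, G α j t * F β (k - j) t
      = - ∫ t in (-1 : ℝ)..1, G α (j + 1) t * F β (k - j - 1) t := by
  have hjk : j + 1 ≤ k := hj
  have hjR : (0 : ℝ) ≤ j := Nat.cast_nonneg j
  have hc1 : ((k - j : ℕ) : ℝ) = (k : ℝ) - j := by exact_mod_cast Nat.cast_sub hj.le
  have hc2 : ((k - j - 1 : ℕ) : ℝ) = (k : ℝ) - j - 1 := by
    rw [show k - j - 1 = k - (j + 1) by omega, Nat.cast_sub hjk]; push_cast; ring
  have hq : 0 ≤ β - ((k - j : ℕ) : ℝ) := by rw [hc1]; linarith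
  have hp : 0 < α - j + (β - ((k - j : ℕ) : ℝ)) := by rw [hc1]; linarith [hα.1]
  have hq' : 0 ≤ β - ((k - j - 1 : ℕ) : ℝ) := by rw [hc2]; linarith
  have hp' : 0 < α - ((j + 1 : ℕ) : ℝ) + (β - ((k - j - 1 : ℕ) : ℝ)) := by
    rw [hc2]; push_cast; linarith [hα.1]
  have hderiv : ∀ t ∈ Set.Ioo (-1 : ℝ) 1,
      HasDerivAt (fun t => G α j t * F β (k - j - 1) t)
        (G α (j + 1) t * F β (k - j - 1) t + G α j t * F β (k - j) t) t := by
    intro t ht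
    have h := (hasDerivAt_G α j ht).mul (hasDerivAt_F β (k - j - 1) ht)
    rwa [show k - j - 1 + 1 = k - j by omega] at h
  have hcont : ContinuousOn (fun t => G α j t * F β (k - j - 1) t) (Set.Icc (-1 : ℝ) 1) := by
    have := contOn_GF (α := α) (β := β) j (k - j - 1) hq' ?_
    · exact this
    · rw [hc2]; linarith [hα.1]
  have hint1 : IntervalIntegrable (fun t => G α (j + 1) t * F β (k - j - 1) t)
      volume (-1 : ℝ) 1 := by
    have := intInt_GF (α := α) (β := β) (j + 1) (k - j - 1) hq' ?_
    · exact this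
    · push_cast at hp' ⊢; exact hp'
  have hint2 : IntervalIntegrable (fun t => G α j t * F β (k - j) t) volume (-1 : ℝ) 1 :=
    intInt_GF j (k - j) hq hp
  have hftc := intervalIntegral.integral_eq_sub_of_hasDerivAt_of_le (by norm_num)
    hcont hderiv (hint1.add hint2)
  have hne1 : α - (j : ℝ) ≠ 0 := by
    rcases Nat.eq_zero_or_pos j with h0 | h1
    · subst h0; simpa using hα.1.ne'
    · have : (1 : ℝ) ≤ j := by exact_mod_cast h1
      have := hα.2; intro h; rw [sub_eq_zero] at h; linarith
  have hne2 : β - ((k - j - 1 : ℕ) : ℝ) ≠ 0 := by rw [hc2]; nlinarith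
  have hu1 : G α j 1 * F β (k - j - 1) 1 = 0 := by
    simp [G, show (1 : ℝ) - 1 = 0 by ring, Real.zero_rpow hne1]
  have hu2 : G α j (-1) * F β (k - j - 1) (-1) = 0 := by
    simp [F, show (1 : ℝ) - (-1) ^ 2 = 0 by ring, Real.zero_rpow hne2]
  rw [intervalIntegral.integral_add hint1 hint2, hu1, hu2] at hftc
  linarith [hftc]

lemma chain {α β : ℝ} (hα : α ∈ Set.Ioo (0 : ℝ) 1) {k : ℕ} (hβ : (k : ℝ) ≤ β) :
    ∀ j, j ≤ k → (∫ t in (-1 : ℝ)..1, G α 0 t * F β k t)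
      = (-1 : ℝ) ^ j * ∫ t in (-1 : ℝ)..1, G α j t * F β (k - j) t := by
  intro j
  induction j with
  | zero => intro _; simp
  | succ j ih =>
    intro hjk
    have hj : j < k := hjk
    rw [ih hj.le, ibp_step hα hβ hj, show k - j - 1 = k - (j + 1) by omega]
    ring

lemma sign_c {α : ℝ} (hα : α ∈ Set.Ioo (0 : ℝ) 1) :
    ∀ k : ℕ, 1 ≤ k → (-1 : ℝ) ^ k * ∏ i ∈ Finset.range k, (α - i) < 0 := by
  intro k
  induction k with
  | zero => intro h; exact absurd h (by norm_num)
  | succ k ih =>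
    intro _
    rcases Nat.eq_zero_or_pos k with h0 | h1
    · subst h0
      simp [Finset.prod_range_one]
      exact hα.1
    · have hk := ih h1
      have hpos : 0 < (k : ℝ) - α := by
        have : (1 : ℝ) ≤ k := by exact_mod_cast h1
        linarith [hα.2]
      rw [Finset.prod_range_succ, pow_succ]
      have heq : ((-1 : ℝ) ^ k * -1) * ((∏ i ∈ Finset.range k, (α - i)) * (α - k))
          = ((-1 : ℝ) ^ k * ∏ i ∈ Finset.range k, (α - i)) * ((k : ℝ) - α) := by ring
      calc (-1 : ℝ) ^ k * -1 * ((∏ i ∈ Finset.range k, (α - i)) * (α - ↑k))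
          = ((-1 : ℝ) ^ k * ∏ i ∈ Finset.range k, (α - i)) * ((k : ℝ) - α) := heq
        _ < 0 := mul_neg_of_neg_of_pos hk hpos

lemma main_neg {α β : ℝ} (hα : α ∈ Set.Ioo (0 : ℝ) 1) {k : ℕ} (hk : 1 ≤ k)
    (hβ : (k : ℝ) ≤ β) :
    (-1 : ℝ) ^ k *
      ∫ t in (-1 : ℝ)..1, (1 - t) ^ α * iteratedDeriv k (fun s : ℝ => (1 - s ^ 2) ^ β) t
      < 0 := by
  have hcongr : (∫ t in (-1 : ℝ)..1,
        (1 - t) ^ α * iteratedDeriv k (fun s : ℝ => (1 - s ^ 2) ^ β) t)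
      = ∫ t in (-1 : ℝ)..1, G α 0 t * F β k t := by
    apply intervalIntegral.integral_congr_ae
    have h1 : ∀ᵐ x : ℝ, x ≠ 1 := by
      refine ae_iff.mpr ?_
      simpa using Real.volume_singleton (x := (1 : ℝ))
    filter_upwards [h1] with t ht1 htIoc
    rw [Set.uIoc_of_le (by norm_num : (-1 : ℝ) ≤ 1)] at htIoc
    have htm : t ∈ Set.Ioo (-1 : ℝ) 1 := ⟨htIoc.1, lt_of_le_of_ne htIoc.2 ht1⟩
    rw [iteratedDeriv_eq β k htm]
    simp [G]
  rw [hcongr, chain hα hβ k le_rfl, Nat.sub_self]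
  set c : ℝ := ∏ i ∈ Finset.range k, (α - i) with hc
  set J : ℝ := ∫ t in (-1 : ℝ)..1,
      (1 - t) ^ (α - (k : ℝ)) * ((1 - t ^ 2) ^ (β - ((0 : ℕ) : ℝ)) * (Q β 0).eval t) with hJ
  have hq0 : (0 : ℝ) ≤ β - ((0 : ℕ) : ℝ) := by push_cast; linarith [Nat.cast_nonneg (α := ℝ) k]
  have hp0 : 0 < α - (k : ℝ) + (β - ((0 : ℕ) : ℝ)) := by push_cast; linarith [hα.1]
  have hIntJ : IntervalIntegrable (fun t : ℝ =>
      (1 - t) ^ (α - (k : ℝ)) * ((1 - t ^ 2) ^ (β - ((0 : ℕ) : ℝ)) * (Q β 0).eval t))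
      volume (-1 : ℝ) 1 := by
    apply ContinuousOn.intervalIntegrable
    rw [Set.uIcc_of_le (by norm_num : (-1 : ℝ) ≤ 1)]
    exact contOn_base _ _ hq0 hp0 (Q β 0)
  have hJpos : 0 < J := by
    rw [hJ]
    apply intervalIntegral.intervalIntegral_pos_of_pos_on hIntJ _ (by norm_num)
    intro t ht
    have h1 : (0 : ℝ) < 1 - t := by linarith [ht.2]
    have h2 : (0 : ℝ) < 1 - t ^ 2 := by nlinarith [ht.1, ht.2]
    have : (Q β 0).eval t = 1 := by simp [Q]
    rw [this, mul_one]
    exact mul_pos (Real.rpow_pos_of_pos h1 _) (Real.rpow_pos_of_pos h2 _)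
  have hInt : (∫ t in (-1 : ℝ)..1, G α k t * F β 0 t) = ((-1 : ℝ) ^ k * c) * J := by
    rw [hJ, ← intervalIntegral.integral_const_mul]
    apply intervalIntegral.integral_congr
    intro t _
    exact GF_eq α β k 0 t
  rw [hInt]
  have hcneg : (-1 : ℝ) ^ k * c < 0 := sign_c hα k hk
  have hsq : (-1 : ℝ) ^ k * ((-1 : ℝ) ^ k * (((-1 : ℝ) ^ k * c) * J))
      = ((-1 : ℝ) ^ k * (-1 : ℝ) ^ k) * (((-1 : ℝ) ^ k * c) * J) := by ring
  have hone : (-1 : ℝ) ^ k * (-1 : ℝ) ^ k = 1 := by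
    rw [← mul_pow]; norm_num
  rw [hsq, hone, one_mul]
  exact mul_neg_of_neg_of_pos hcneg hJpos

lemma sphereArea_pos {n : ℕ} (hn : 0 < n) : 0 < sphereArea n := by
  rw [sphereArea, MeasureTheory.Measure.toSphere_apply_univ]
  have hdim : Module.finrank ℝ (EuclideanSpace ℝ (Fin n)) = n := finrank_euclideanSpace_fin
  apply ENNReal.toReal_pos
  · apply mul_ne_zero
    · rw [hdim]; exact_mod_cast Nat.cast_ne_zero.mpr hn.ne'
    · exact (measure_ball_pos _ _ one_pos).ne'
  · exact (ENNReal.mul_lt_top (ENNReal.natCast_lt_top _) measure_ball_lt_top).ne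

end Statement9Aux


theorem statement9 (d : ℕ) (hd : 3 ≤ d) (lam : ℝ) (hlam₁ : -2 < lam) (hlam₂ : lam < 0)
    (k : ℕ) (hk : 1 ≤ k) :
    ((-1 : ℝ) ^ k *
        ∫ t in (-1 : ℝ)..1, (1 - t) ^ (-lam / 2) *
          iteratedDeriv k (fun s : ℝ => (1 - s ^ 2) ^ ((k : ℝ) + ((d : ℝ) - 3) / 2)) t) < 0 ∧
      sphereArea (d - 1) *
        ((-1 : ℝ) ^ k *
          (Real.Gamma (((d : ℝ) - 1) / 2) / (2 ^ k * Real.Gamma ((k : ℝ) + ((d : ℝ) - 1) / 2)) *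
            ∫ t in (-1 : ℝ)..1, (1 - t) ^ (-lam / 2) *
              iteratedDeriv k (fun s : ℝ => (1 - s ^ 2) ^ ((k : ℝ) + ((d : ℝ) - 3) / 2)) t)) < 0 := by
  have hα : (-lam / 2) ∈ Set.Ioo (0 : ℝ) 1 := ⟨by linarith, by linarith⟩
  have hd3 : (3 : ℝ) ≤ (d : ℝ) := by exact_mod_cast hd
  have hβ : (k : ℝ) ≤ (k : ℝ) + ((d : ℝ) - 3) / 2 := by linarith
  have hneg := Statement9Aux.main_neg (α := -lam / 2) (β := (k : ℝ) + ((d : ℝ) - 3) / 2) hα hk hβ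
  refine ⟨hneg, ?_⟩
  have hR : 0 < Real.Gamma (((d : ℝ) - 1) / 2) /
      (2 ^ k * Real.Gamma ((k : ℝ) + ((d : ℝ) - 1) / 2)) := by
    apply div_pos (Real.Gamma_pos_of_pos (by linarith))
    exact mul_pos (by positivity) (Real.Gamma_pos_of_pos (by
      have : (0 : ℝ) ≤ k := Nat.cast_nonneg k
      linarith))
  have hS : 0 < sphereArea (d - 1) := Statement9Aux.sphereArea_pos (by omega)
  set I : ℝ := ∫ t in (-1 : ℝ)..1, (1 - t) ^ (-lam / 2) *
      iteratedDeriv k (fun s : ℝ => (1 - s ^ 2) ^ ((k : ℝ) + ((d : ℝ) - 3) / 2)) t with hI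
  have hre : (-1 : ℝ) ^ k *
      (Real.Gamma (((d : ℝ) - 1) / 2) / (2 ^ k * Real.Gamma ((k : ℝ) + ((d : ℝ) - 1) / 2)) * I)
      = Real.Gamma (((d : ℝ) - 1) / 2) / (2 ^ k * Real.Gamma ((k : ℝ) + ((d : ℝ) - 1) / 2)) *
        ((-1 : ℝ) ^ k * I) := by ring
  rw [hre]
  exact mul_neg_of_pos_of_neg hS (mul_neg_of_pos_of_neg hR hneg)
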